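/- For a finite abelian group A, there is a short exact sequence 0 → Hom(A, (1/2)ℤ/ℤ) → Quad(A, ℝ/ℤ) → Hom(S²(A), ℝ/ℤ) → 0, where the second map sends a quadratic form q to its polarization b_q viewed as a homomorphism S²(A) → ℝ/ℤ; in particular the polarization map b is surjective. -/

import Mathlib

variable {A B : Type*} [AddCommGroup A] [AddCommGroup B]

/-- The polarization of a map between abelian groups. -/
def polz (γ : A → B) (x y : A) : B := γ (x + y) - γ x - γ y

/-- A quadratic form between abelian groups: even, with bilinear polarization. -/
def IsQuadratic (γ : A → B) : Prop :=
  (∀ a, γ a = γ (-a)) ∧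
  (∀ x x' y, polz γ (x + x') y = polz γ x y + polz γ x' y) ∧
  (∀ x y y', polz γ x (y + y') = polz γ x y + polz γ x y')

lemma polz_add_fun (f g : A → B) (x y : A) :
    polz (f + g) x y = polz f x y + polz g x y := by
  simp only [polz, Pi.add_apply]; abel

lemma polz_neg_fun (f : A → B) (x y : A) :
    polz (-f) x y = - polz f x y := by
  simp only [polz, Pi.neg_apply]; abel

/-- The group of `ℝ/ℤ`-valued quadratic forms on `A`. -/
noncomputable def QuadGroup (A : Type*) [AddCommGroup A] : AddSubgroup (A → AddCircle (1 : ℝ)) where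
  carrier := {γ | IsQuadratic γ}
  zero_mem' := ⟨fun _ => rfl, fun _ _ _ => by simp [polz], fun _ _ _ => by simp [polz]⟩
  add_mem' := by
    rintro f g ⟨hf1, hf2, hf3⟩ ⟨hg1, hg2, hg3⟩
    refine ⟨fun a => by simp only [Pi.add_apply, hf1 a, hg1 a], fun x x' y => ?_,
      fun x y y' => ?_⟩
    · rw [polz_add_fun, polz_add_fun, polz_add_fun, hf2, hg2]; abel
    · rw [polz_add_fun, polz_add_fun, polz_add_fun, hf3, hg3]; abel
  neg_mem' := by
    rintro f ⟨hf1, hf2, hf3⟩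
    refine ⟨fun a => by simp only [Pi.neg_apply, hf1 a], fun x x' y => ?_, fun x y y' => ?_⟩
    · rw [polz_neg_fun, polz_neg_fun, polz_neg_fun, hf2]; abel
    · rw [polz_neg_fun, polz_neg_fun, polz_neg_fun, hf3]; abel

open TensorProduct

/-- The second symmetric power `S²(A) = (A ⊗ A)/⟨a⊗b - b⊗a⟩` of `A` as a ℤ-module. -/
abbrev symPower2 (A : Type*) [AddCommGroup A] :=
  (TensorProduct ℤ A A) ⧸
    (Submodule.span ℤ {x : TensorProduct ℤ A A | ∃ a b : A, x = a ⊗ₜ[ℤ] b - b ⊗ₜ[ℤ] a})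


namespace PolarizationAux

universe u v

local notation "T1" => AddCircle (1 : ℝ)

lemma exists_extension' {X : Type v} {Y : Type u} [AddCommGroup X] [AddCommGroup Y]
    (i : X →+ Y) (hi : Function.Injective i) (f : X →+ T1) :
    ∃ g : Y →+ T1, ∀ x, g (i x) = f x := by
  let eX : ULift.{max u v} X ≃+ X := AddEquiv.ulift
  let eY : ULift.{max u v} Y ≃+ Y := AddEquiv.ulift
  let eT : ULift.{max u v} T1 ≃+ T1 := AddEquiv.ulift
  let i' : AddCommGrpCat.of (ULift.{max u v} X) ⟶ AddCommGrpCat.of (ULift.{max u v} Y) :=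
    AddCommGrpCat.ofHom (eY.symm.toAddMonoidHom.comp (i.comp eX.toAddMonoidHom))
  haveI : CategoryTheory.Mono i' := by
    rw [AddCommGrpCat.mono_iff_injective]
    exact eY.symm.injective.comp (hi.comp eX.injective)
  haveI : DivisibleBy (ULift.{max u v} T1) ℤ := ULift.instDivisibleBy _ _
  haveI : CategoryTheory.Injective (AddCommGrpCat.of (ULift.{max u v} T1)) :=
    AddCommGrpCat.injective_of_divisible _
  let f' : AddCommGrpCat.of (ULift.{max u v} X) ⟶ AddCommGrpCat.of (ULift.{max u v} T1) :=
    AddCommGrpCat.ofHom (eT.symm.toAddMonoidHom.comp (f.comp eX.toAddMonoidHom))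
  let g' := CategoryTheory.Injective.factorThru f' i'
  have hfac : ∀ x', g' (i' x') = f' x' := fun x' => by
    rw [← CategoryTheory.comp_apply (f := i') (g := g'),
      CategoryTheory.Injective.comp_factorThru]
  let gm : ULift.{max u v} Y →+ ULift.{max u v} T1 := g'.hom
  refine ⟨eT.toAddMonoidHom.comp (gm.comp eY.symm.toAddMonoidHom), fun x => ?_⟩
  have h3 : eY.symm (i x) = i' (eX.symm x) := by simp [i', eY, eX]
  have h2 : eT (g' (i' (eX.symm x))) = f x := by
    rw [hfac (eX.symm x)]; simp [f', eT, eX]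
  exact (congrArg (fun z => eT (gm z)) h3).trans h2

/-- The extension of `A` by `ℝ/ℤ` determined by the 2-cocycle `B`. -/
structure Tw {A : Type u} [AddCommGroup A] (B : A →+ A →+ T1) : Type u where
  c : T1
  a : A

variable {A : Type u} [AddCommGroup A]

noncomputable instance (B : A →+ A →+ T1) : Add (Tw B) :=
  ⟨fun x y => ⟨x.c + y.c + B x.a y.a, x.a + y.a⟩⟩

noncomputable instance (B : A →+ A →+ T1) : Zero (Tw B) := ⟨⟨0, 0⟩⟩

noncomputable instance (B : A →+ A →+ T1) : Neg (Tw B) :=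
  ⟨fun x => ⟨-x.c + B x.a x.a, -x.a⟩⟩

lemma Tw.add_def (B : A →+ A →+ T1) (x y : Tw B) :
    x + y = ⟨x.c + y.c + B x.a y.a, x.a + y.a⟩ := rfl

lemma Tw.zero_def (B : A →+ A →+ T1) : (0 : Tw B) = ⟨0, 0⟩ := rfl

lemma Tw.neg_def (B : A →+ A →+ T1) (x : Tw B) : -x = ⟨-x.c + B x.a x.a, -x.a⟩ := rfl

noncomputable def twGroup (B : A →+ A →+ T1) (hsym : ∀ a b, B a b = B b a) :
    AddCommGroup (Tw B) where
  add := (· + ·)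
  zero := 0
  neg := Neg.neg
  nsmul := nsmulRec
  zsmul := zsmulRec
  add_assoc x y z := by
    simp only [Tw.add_def, Tw.mk.injEq, map_add, AddMonoidHom.add_apply]
    refine ⟨by abel, add_assoc _ _ _⟩
  zero_add x := by
    simp only [Tw.add_def, Tw.zero_def, map_zero, AddMonoidHom.zero_apply, add_zero, zero_add]
  add_zero x := by
    simp only [Tw.add_def, Tw.zero_def, map_zero, AddMonoidHom.zero_apply, add_zero]
  neg_add_cancel x := by
    simp only [Tw.add_def, Tw.neg_def, Tw.zero_def, Tw.mk.injEq, map_neg,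
      AddMonoidHom.neg_apply, neg_add_cancel]
    refine ⟨by abel, trivial⟩
  add_comm x y := by
    simp only [Tw.add_def, Tw.mk.injEq]
    exact ⟨by rw [hsym]; abel, add_comm _ _⟩

/-- Existence of an even quadratic refinement of any symmetric biadditive form. -/
lemma exists_refinement (B : A →+ A →+ T1) (hsym : ∀ a b, B a b = B b a) :
    ∃ q : A → T1, IsQuadratic q ∧ ∀ a b, polz q a b = B a b := by
  letI := twGroup B hsym
  have hadd : ∀ x y : Tw B, x + y = ⟨x.c + y.c + B x.a y.a, x.a + y.a⟩ := fun _ _ => rfl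
  -- the inclusion ℝ/ℤ → Tw B
  let i : T1 →+ Tw B := AddMonoidHom.mk' (fun c => ⟨c, 0⟩) (by
    intro c d
    erw [hadd]
    simp)
  have hi : Function.Injective i := by
    intro c d h
    simpa [i, Tw.mk.injEq] using h
  obtain ⟨r, hr⟩ := exists_extension' i hi (AddMonoidHom.id T1)
  set q : A → T1 := fun a => - r ⟨0, a⟩ with hqdef
  have key : ∀ a b : A, r ⟨0, a⟩ + r ⟨0, b⟩ = B a b + r ⟨0, a + b⟩ := by
    intro a b
    have h1 : (⟨0, a⟩ : Tw B) + ⟨0, b⟩ = ⟨B a b, a + b⟩ := by rw [hadd]; simp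
    have h2 : i (B a b) + (⟨0, a + b⟩ : Tw B) = ⟨B a b, a + b⟩ := by
      show (⟨B a b, 0⟩ : Tw B) + _ = _
      rw [hadd]; simp
    erw [← map_add r, h1, ← h2, map_add r, hr]
    rfl
  have hpolz : ∀ a b, polz q a b = B a b := by
    intro a b
    show -r ⟨0, a + b⟩ - -r ⟨0, a⟩ - -r ⟨0, b⟩ = B a b
    have := key a b
    rw [show -r ⟨0, a + b⟩ - -r ⟨0, a⟩ - -r ⟨0, b⟩
        = (r ⟨0, a⟩ + r ⟨0, b⟩) - r ⟨0, a + b⟩ by abel, this]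
    abel
  have hq : ∀ a b, q (a + b) = B a b + q a + q b := by
    intro a b
    rw [← hpolz a b]; simp only [polz]; abel
  -- the defect character
  let χ : A →+ T1 := AddMonoidHom.mk' (fun a => q a - q (-a)) (by
    intro a b
    show q (a + b) - q (-(a + b)) = (q a - q (-a)) + (q b - q (-b))
    have h1 := hq a b
    have h2 := hq (-a) (-b)
    rw [show -a + -b = -(a+b) by abel] at h2
    have h3 : B (-a) (-b) = B a b := by simp
    rw [h1, h2, h3]
    abel)
  -- doubling map
  let d : A →+ A := AddMonoidHom.mk' (fun a => a + a) (fun a b => by abel)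
  have hχker : ∀ x ∈ d.ker, χ x = 0 := by
    intro x hx
    have hx' : x + x = 0 := hx
    have : -x = x := by rw [neg_eq_iff_add_eq_zero]; exact hx'
    show q x - q (-x) = 0
    rw [this, sub_self]
  have hdle : d.ker ≤ χ.ker := fun x hx => hχker x hx
  let χbar : A ⧸ d.ker →+ T1 := QuotientAddGroup.lift d.ker χ hdle
  let dbar : A ⧸ d.ker →+ A := QuotientAddGroup.lift d.ker d (fun x hx => hx)
  have hdinj : Function.Injective dbar := by
    rw [injective_iff_map_eq_zero]
    intro x
    induction x using QuotientAddGroup.induction_on with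
    | H a =>
      intro ha
      exact (QuotientAddGroup.eq_zero_iff a).2 ha
  obtain ⟨ψ, hψ⟩ := exists_extension' dbar hdinj χbar
  have hψ2 : ∀ a : A, ψ a + ψ a = χ a := by
    intro a
    have := hψ (QuotientAddGroup.mk a)
    have hd : dbar (QuotientAddGroup.mk a) = a + a := rfl
    have hc : χbar (QuotientAddGroup.mk a) = χ a := rfl
    rw [hd, hc, map_add] at this
    exact this
  have hpolz' : ∀ a b, polz (fun a => q a - ψ a) a b = B a b := by
    intro a b
    show (q (a + b) - ψ (a + b)) - (q a - ψ a) - (q b - ψ b) = B a b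
    rw [map_add, ← hpolz a b]
    simp only [polz]
    abel
  refine ⟨fun a => q a - ψ a, ⟨fun a => ?_, fun x x' y => ?_, fun x y y' => ?_⟩, hpolz'⟩
  · show q a - ψ a = q (-a) - ψ (-a)
    rw [map_neg, sub_neg_eq_add, sub_eq_iff_eq_add, add_assoc]
    have h2 := hψ2 a
    have hχ : χ a = q a - q (-a) := rfl
    rw [hχ] at h2
    rw [h2]
    abel
  · rw [hpolz', hpolz', hpolz', map_add, AddMonoidHom.add_apply]
  · rw [hpolz', hpolz', hpolz', map_add]


variable {A : Type u} [AddCommGroup A]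

/-- The polarization of a quadratic map, as a biadditive map. -/
noncomputable def polzHom (q : A → T1) (hq : IsQuadratic q) : A →+ A →+ T1 :=
  AddMonoidHom.mk' (fun x => AddMonoidHom.mk' (polz q x) (fun y y' => hq.2.2 x y y'))
    (fun x x' => AddMonoidHom.ext fun y => hq.2.1 x x' y)

lemma polz_comm (q : A → T1) (a b : A) : polz q a b = polz q b a := by
  simp only [polz, add_comm a b]
  abel

/-- The lift of the polarization to the tensor square. -/
noncomputable def tensorLift (q : A → T1) (hq : IsQuadratic q) : (TensorProduct ℤ A A) →+ T1 :=
  TensorProduct.liftAddHom (polzHom q hq) (fun r m n => by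
    rw [map_zsmul, AddMonoidHom.smul_apply, map_zsmul])

/-- The polarization descends to the symmetric square. -/
noncomputable def betaQ (q : A → T1) (hq : IsQuadratic q) : symPower2 A →+ T1 :=
  (Submodule.liftQ _ (tensorLift q hq).toIntLinearMap (by
    rw [Submodule.span_le]
    rintro x ⟨a, b, rfl⟩
    simp only [SetLike.mem_coe, LinearMap.mem_ker, map_sub,
      AddMonoidHom.coe_toIntLinearMap, tensorLift, TensorProduct.liftAddHom_tmul]
    show polz q a b - polz q b a = 0
    rw [polz_comm q a b, sub_self])).toAddMonoidHom

lemma betaQ_apply (q : A → T1) (hq : IsQuadratic q) (a b : A) :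
    betaQ q hq (Submodule.Quotient.mk (a ⊗ₜ[ℤ] b)) = polz q a b := rfl

lemma symPower2_hom_ext {C : Type*} [AddCommMonoid C] {f g : symPower2 A →+ C}
    (h : ∀ a b : A, f (Submodule.Quotient.mk (a ⊗ₜ[ℤ] b)) =
      g (Submodule.Quotient.mk (a ⊗ₜ[ℤ] b))) : f = g := by
  ext x
  obtain ⟨t, rfl⟩ := Submodule.Quotient.mk_surjective _ x
  induction t using TensorProduct.induction_on with
  | zero =>
    have : (Submodule.Quotient.mk (0 : TensorProduct ℤ A A) : symPower2 A) = 0 := rfl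
    rw [this, map_zero, map_zero]
  | tmul a b => exact h a b
  | add x y hx hy =>
    have : (Submodule.Quotient.mk (x + y : TensorProduct ℤ A A) : symPower2 A)
        = Submodule.Quotient.mk x + Submodule.Quotient.mk y := rfl
    rw [this, map_add, map_add, hx, hy]

lemma polarization_aux (A : Type u) [AddCommGroup A] :
    ∃ β : QuadGroup A →+ (symPower2 A →+ AddCircle (1 : ℝ)),
      (∀ (q : QuadGroup A) (a b : A),
        β q (Submodule.Quotient.mk (a ⊗ₜ[ℤ] b)) =
          polz (q : A → AddCircle (1 : ℝ)) a b) ∧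
      Function.Surjective β ∧
      (∀ q : QuadGroup A, q ∈ β.ker ↔
        ((∀ x y : A, (q : A → AddCircle (1 : ℝ)) (x + y) =
            (q : A → AddCircle (1 : ℝ)) x + (q : A → AddCircle (1 : ℝ)) y) ∧
         ∀ a : A, (2 : ℕ) • (q : A → AddCircle (1 : ℝ)) a = 0)) := by
  refine ⟨AddMonoidHom.mk' (fun q => betaQ (q : A → T1) q.2) (fun q q' => ?_), ?_, ?_, ?_⟩
  · refine symPower2_hom_ext fun a b => ?_
    erw [betaQ_apply]
    show polz ((q : A → T1) + (q' : A → T1)) a b = _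
    rw [polz_add_fun]
    rfl
  · intro q a b
    exact betaQ_apply _ _ a b
  · -- surjectivity
    intro φ
    have hBadd : ∀ a b b' : A, φ (Submodule.Quotient.mk (a ⊗ₜ[ℤ] (b + b')))
        = φ (Submodule.Quotient.mk (a ⊗ₜ[ℤ] b)) + φ (Submodule.Quotient.mk (a ⊗ₜ[ℤ] b')) := by
      intro a b b'
      rw [show (Submodule.Quotient.mk (a ⊗ₜ[ℤ] (b + b')) : symPower2 A)
          = Submodule.Quotient.mk (a ⊗ₜ[ℤ] b) + Submodule.Quotient.mk (a ⊗ₜ[ℤ] b') by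
        rw [TensorProduct.tmul_add]; rfl, map_add]
    have hBadd' : ∀ a a' b : A, φ (Submodule.Quotient.mk ((a + a') ⊗ₜ[ℤ] b))
        = φ (Submodule.Quotient.mk (a ⊗ₜ[ℤ] b)) + φ (Submodule.Quotient.mk (a' ⊗ₜ[ℤ] b)) := by
      intro a a' b
      rw [show (Submodule.Quotient.mk ((a + a') ⊗ₜ[ℤ] b) : symPower2 A)
          = Submodule.Quotient.mk (a ⊗ₜ[ℤ] b) + Submodule.Quotient.mk (a' ⊗ₜ[ℤ] b) by
        rw [TensorProduct.add_tmul]; rfl, map_add]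
    let B : A →+ A →+ T1 := AddMonoidHom.mk'
      (fun a => AddMonoidHom.mk' (fun b => φ (Submodule.Quotient.mk (a ⊗ₜ[ℤ] b))) (hBadd a))
      (fun a a' => AddMonoidHom.ext fun b => hBadd' a a' b)
    have hsym : ∀ a b, B a b = B b a := by
      intro a b
      show φ (Submodule.Quotient.mk (a ⊗ₜ[ℤ] b)) = φ (Submodule.Quotient.mk (b ⊗ₜ[ℤ] a))
      congr 1
      rw [Submodule.Quotient.eq]
      exact Submodule.subset_span ⟨a, b, rfl⟩
    obtain ⟨q, hq, hpolz⟩ := exists_refinement B hsym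
    refine ⟨⟨q, hq⟩, symPower2_hom_ext fun a b => ?_⟩
    exact hpolz a b
  · -- kernel
    intro q
    constructor
    · intro hker
      have h0 : ∀ a b : A, polz (q : A → T1) a b = 0 := by
        intro a b
        have : betaQ (q : A → T1) q.2 = 0 := hker
        rw [← betaQ_apply (q : A → T1) q.2 a b, this]
        rfl
      have hadd : ∀ x y : A, (q : A → T1) (x + y) = (q : A → T1) x + (q : A → T1) y := by
        intro x y
        have := h0 x y
        simp only [polz] at this
        rw [sub_sub, sub_eq_zero] at this
        exact this
      refine ⟨hadd, fun a => ?_⟩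
      have hzero : (q : A → T1) 0 = 0 := by
        have := hadd 0 0
        rw [add_zero] at this
        exact (left_eq_add.mp this)
      rw [two_nsmul]
      calc (q : A → T1) a + (q : A → T1) a
          = (q : A → T1) a + (q : A → T1) (-a) := by rw [← q.2.1 a]
        _ = (q : A → T1) (a + -a) := (hadd a (-a)).symm
        _ = 0 := by rw [add_neg_cancel, hzero]
    · rintro ⟨hadd, -⟩
      show betaQ (q : A → T1) q.2 = 0
      refine symPower2_hom_ext fun a b => ?_
      erw [betaQ_apply]
      show polz (q : A → T1) a b = (0 : symPower2 A →+ T1) _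
      simp only [AddMonoidHom.zero_apply, polz, hadd a b]
      abel

end PolarizationAux

open PolarizationAux

/-- For a finite abelian group `A`, there is a short exact sequence
`0 → Hom(A, (1/2)ℤ/ℤ) → Quad(A, ℝ/ℤ) → Hom(S²(A), ℝ/ℤ) → 0`, where the second map sends
a quadratic form to its polarization: the polarization map is surjective and its kernel
consists exactly of the homomorphisms `A → {0, 1/2} ⊂ ℝ/ℤ`. -/
theorem polarization_exact_sequence (A : Type*) [AddCommGroup A] [Finite A] :
    ∃ β : QuadGroup A →+ (symPower2 A →+ AddCircle (1 : ℝ)),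
      (∀ (q : QuadGroup A) (a b : A),
        β q (Submodule.Quotient.mk (a ⊗ₜ[ℤ] b)) =
          polz (q : A → AddCircle (1 : ℝ)) a b) ∧
      Function.Surjective β ∧
      (∀ q : QuadGroup A, q ∈ β.ker ↔
        ((∀ x y : A, (q : A → AddCircle (1 : ℝ)) (x + y) =
            (q : A → AddCircle (1 : ℝ)) x + (q : A → AddCircle (1 : ℝ)) y) ∧
         ∀ a : A, (2 : ℕ) • (q : A → AddCircle (1 : ℝ)) a = 0)) := by
  exact polarization_aux A
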